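/- In the setting of the double-sample algorithm (X_i, Y_i, Z_i ~ F_i mutually independent, Y* = max_i Y_i, distinct values a.s.), for any index i = π(t) and values x > y: Pr[hire i | X_i = x, Y* = y] = ∏_{j=1}^n F_j(y), which depends on neither i nor the permutation π. Consequently Pr[hire i | X_i = x] = ∑_y Pr[Y* = y]·∏_{j=1}^n F_j(y)·1[x > y] — the same for every i and every arrival ordering — so the algorithm satisfies both IIF and TIF. -/

import Mathlib

open Finset MeasureTheory ProbabilityTheory
open scoped Classical

section Aux

variable {Ω : Type*} [MeasurableSpace Ω] (μ : Measure Ω) [IsProbabilityMeasure μ]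
variable (n : ℕ)

/-- core computations, as a standalone lemma -/
theorem aux_key (hn : 0 < n) (X Y Z : Fin n → Ω → ℝ)
    (hmX : ∀ i, Measurable (X i)) (hmY : ∀ i, Measurable (Y i))
    (hmZ : ∀ i, Measurable (Z i))
    (hindep : iIndepFun (fun (q : Fin 3 × Fin n) => ![X, Y, Z] q.1 q.2) μ)
    (hidZ : ∀ i, IdentDistrib (X i) (Z i) μ μ)
    (Ystar : Ω → ℝ) (hYstar : ∀ ω, Ystar ω = ⨆ i, Y i ω)
    (σ : Equiv.Perm (Fin n)) (i : Fin n) (y : ℝ) :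
    (μ {ω | (∀ s : Fin n, s < σ.symm i → X (σ s) ω < y) ∧
        (∀ s : Fin n, σ.symm i ≤ s → Z (σ s) ω < y)} = ∏ j : Fin n, μ {ω | X j ω < y}) ∧
    (∀ x : ℝ, μ (({ω | X i ω = x} ∩ {ω | Ystar ω = y}) ∩
        {ω | (∀ s : Fin n, s < σ.symm i → X (σ s) ω < y) ∧
          (∀ s : Fin n, σ.symm i ≤ s → Z (σ s) ω < y)}) =
      μ ({ω | X i ω = x} ∩ {ω | Ystar ω = y}) *
        μ {ω | (∀ s : Fin n, s < σ.symm i → X (σ s) ω < y) ∧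
          (∀ s : Fin n, σ.symm i ≤ s → Z (σ s) ω < y)}) := by
  classical
  haveI : Nonempty (Fin n) := ⟨⟨0, hn⟩⟩
  set f : Fin 3 × Fin n → Ω → ℝ := fun q => ![X, Y, Z] q.1 q.2 with hfdef
  have hf0 : ∀ j, f ((0 : Fin 3), j) = X j := fun j => rfl
  have hf1 : ∀ j, f ((1 : Fin 3), j) = Y j := fun j => rfl
  have hf2 : ∀ j, f ((2 : Fin 3), j) = Z j := fun j => rfl
  have hmf : ∀ q, Measurable (f q) := by
    rintro ⟨a, j⟩
    fin_cases a
    · exact hmX j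
    · exact hmY j
    · exact hmZ j
  set t : Fin n := σ.symm i with htdef
  set B : Set Ω := {ω | (∀ s : Fin n, s < t → X (σ s) ω < y) ∧
      (∀ s : Fin n, t ≤ s → Z (σ s) ω < y)} with hBdef
  set u : Fin n → Fin 3 × Fin n := fun s => (if s < t then (0 : Fin 3) else 2, σ s) with hudef
  have huinj : Function.Injective u := by
    intro s s' h
    have : σ s = σ s' := congrArg Prod.snd h
    exact σ.injective this
  set T : Finset (Fin 3 × Fin n) := Finset.univ.image u with hTdef
  set c : Fin 3 × Fin n → Set Ω := fun q => {ω | f q ω < y} with hcdef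
  have hfu : ∀ s, f (u s) = if s < t then X (σ s) else Z (σ s) := by
    intro s
    by_cases hs : s < t <;> simp [hudef, hs, hf0, hf2]
  have hBeq : B = ⋂ q ∈ T, c q := by
    ext ω
    simp only [hBdef, Set.mem_setOf_eq, Set.mem_iInter, hTdef, Finset.mem_image,
      Finset.mem_univ, true_and]
    constructor
    · rintro ⟨h1, h2⟩ q ⟨s, rfl⟩
      by_cases hs : s < t
      · simpa [hcdef, hfu, hs] using h1 s hs
      · simpa [hcdef, hfu, hs] using h2 s (not_lt.1 hs)
    · intro h
      refine ⟨fun s hs => ?_, fun s hs => ?_⟩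
      · simpa [hcdef, hfu, hs] using h (u s) ⟨s, rfl⟩
      · simpa [hcdef, hfu, not_lt.2 hs] using h (u s) ⟨s, rfl⟩
  have hBprod : μ B = ∏ j : Fin n, μ {ω | X j ω < y} := by
    have hmc : ∀ q ∈ T, MeasurableSet[MeasurableSpace.comap (f q) inferInstance] (c q) :=
      fun q _ => ⟨Set.Iio y, measurableSet_Iio, rfl⟩
    rw [hBeq, hindep.meas_biInter (S := T) (s := c) hmc]
    rw [hTdef, Finset.prod_image (fun s _ s' _ h => huinj h)]
    rw [← Equiv.prod_comp σ (fun j => μ {ω | X j ω < y})]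
    refine Finset.prod_congr rfl fun s _ => ?_
    by_cases hs : s < t
    · simp [hcdef, hfu, hs]
    · simp only [hcdef, hfu, hs, if_false]
      exact ((hidZ (σ s)).measure_mem_eq measurableSet_Iio).symm
  refine ⟨hBprod, fun x => ?_⟩
  -- independence part
  set S₁ : Finset (Fin 3 × Fin n) :=
    insert ((0 : Fin 3), i) (({(1 : Fin 3)} : Finset (Fin 3)) ×ˢ Finset.univ) with hS₁def
  have hdisj : Disjoint S₁ T := by
    rw [Finset.disjoint_left]
    intro q hq hq'
    simp only [hTdef, Finset.mem_image, Finset.mem_univ, true_and] at hq'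
    obtain ⟨s, hs⟩ := hq'
    simp only [hudef, Prod.mk.injEq] at hs
    simp only [hS₁def, Finset.mem_insert, Finset.mem_product, Finset.mem_singleton,
      Finset.mem_univ, and_true] at hq
    rcases hq with hq | hq
    · rw [hq, Prod.mk.injEq] at hs
      obtain ⟨h1, h2⟩ := hs
      by_cases hst : s < t
      · have hst' : s = t := by rw [htdef, ← h2, Equiv.symm_apply_apply]
        exact absurd hst' (ne_of_lt hst)
      · rw [if_neg hst] at h1
        exact absurd h1 (by decide)
    · have h1 : (if s < t then (0 : Fin 3) else 2) = q.1 := congrArg Prod.fst hs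
      rw [hq] at h1
      by_cases hst : s < t <;> simp [hst] at h1
  have h0mem : ((0 : Fin 3), i) ∈ S₁ := Finset.mem_insert_self _ _
  have h1mem : ∀ j : Fin n, ((1 : Fin 3), j) ∈ S₁ := fun j =>
    Finset.mem_insert_of_mem (by simp)
  have hIF : IndepFun (fun a (q : S₁) => f q a) (fun a (q : T) => f q a) μ :=
    hindep.indepFun_finset S₁ T hdisj hmf
  set φ : (S₁ → ℝ) → ℝ × ℝ := fun v => (v ⟨((0 : Fin 3), i), h0mem⟩,
    ⨆ j : Fin n, v ⟨((1 : Fin 3), j), h1mem j⟩) with hφdef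
  have hφm : Measurable φ :=
    (measurable_pi_apply _).prodMk (Measurable.iSup fun j => measurable_pi_apply _)
  have hcomp : IndepFun (φ ∘ fun a (q : S₁) => f q a) (fun a (q : T) => f q a) μ :=
    hIF.comp hφm measurable_id
  have hpair : (φ ∘ fun a (q : S₁) => f q a) = fun ω => (X i ω, Ystar ω) := by
    funext ω
    simp only [Function.comp_apply, hφdef, hf0, hf1, hYstar ω]
  rw [hpair] at hcomp
  have hA : ({ω | X i ω = x} ∩ {ω | Ystar ω = y}) =
      (fun ω => (X i ω, Ystar ω)) ⁻¹' ({x} ×ˢ {y}) := by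
    ext ω; simp [Set.mem_prod]
  have hB2 : B = (fun a (q : T) => f q a) ⁻¹' {w : T → ℝ | ∀ q : T, w q < y} := by
    rw [hBeq]
    ext ω
    simp only [Set.mem_iInter, Set.mem_preimage, Set.mem_setOf_eq]
    exact ⟨fun h q => h q q.2, fun h q hq => h ⟨q, hq⟩⟩
  have hMB : MeasurableSet {w : T → ℝ | ∀ q : T, w q < y} := by
    have : {w : T → ℝ | ∀ q : T, w q < y} = ⋂ q : T, (fun w : T → ℝ => w q) ⁻¹' Set.Iio y := by
      ext w; simp
    rw [this]
    exact MeasurableSet.iInter fun q => (measurable_pi_apply q) measurableSet_Iio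
  rw [hA, hB2]
  exact hcomp.measure_inter_preimage_eq_mul _ _
    ((measurableSet_singleton x).prod (measurableSet_singleton y)) hMB


theorem aux_split (hn : 0 < n) (X Y Z : Fin n → Ω → ℝ)
    (hmX : ∀ i, Measurable (X i)) (hmY : ∀ i, Measurable (Y i))
    (hmZ : ∀ i, Measurable (Z i))
    (hindep : iIndepFun (fun (q : Fin 3 × Fin n) => ![X, Y, Z] q.1 q.2) μ)
    (Ystar : Ω → ℝ) (hYstar : ∀ ω, Ystar ω = ⨆ i, Y i ω)
    (i : Fin n) (x y : ℝ) :
    μ ({ω | X i ω = x} ∩ {ω | Ystar ω = y}) = μ {ω | X i ω = x} * μ {ω | Ystar ω = y} := by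
  classical
  haveI : Nonempty (Fin n) := ⟨⟨0, hn⟩⟩
  set f : Fin 3 × Fin n → Ω → ℝ := fun q => ![X, Y, Z] q.1 q.2 with hfdef
  have hf0 : ∀ j, f ((0 : Fin 3), j) = X j := fun j => rfl
  have hf1 : ∀ j, f ((1 : Fin 3), j) = Y j := fun j => rfl
  have hmf : ∀ q, Measurable (f q) := by
    rintro ⟨a, j⟩
    fin_cases a
    · exact hmX j
    · exact hmY j
    · exact hmZ j
  set S₁ : Finset (Fin 3 × Fin n) := {((0 : Fin 3), i)} with hS₁def
  set S₂ : Finset (Fin 3 × Fin n) := ({(1 : Fin 3)} : Finset (Fin 3)) ×ˢ Finset.univ with hS₂def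
  have hdisj : Disjoint S₁ S₂ := by
    rw [Finset.disjoint_left]
    intro q hq hq'
    simp only [hS₁def, Finset.mem_singleton] at hq
    simp only [hS₂def, Finset.mem_product, Finset.mem_singleton] at hq'
    rw [hq] at hq'
    exact absurd hq'.1 (by simp)
  have hIF : IndepFun (fun a (q : S₁) => f q a) (fun a (q : S₂) => f q a) μ :=
    hindep.indepFun_finset S₁ S₂ hdisj hmf
  have h0mem : ((0 : Fin 3), i) ∈ S₁ := Finset.mem_singleton_self _
  have h1mem : ∀ j : Fin n, ((1 : Fin 3), j) ∈ S₂ := fun j => by simp [hS₂def]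
  have hcomp : IndepFun
      ((fun v : S₁ → ℝ => v ⟨((0 : Fin 3), i), h0mem⟩) ∘ fun a (q : S₁) => f q a)
      ((fun w : S₂ → ℝ => ⨆ j : Fin n, w ⟨((1 : Fin 3), j), h1mem j⟩) ∘
        fun a (q : S₂) => f q a) μ :=
    hIF.comp (measurable_pi_apply _) (Measurable.iSup fun j => measurable_pi_apply _)
  have he1 : ((fun v : S₁ → ℝ => v ⟨((0 : Fin 3), i), h0mem⟩) ∘ fun a (q : S₁) => f q a) = X i :=
    rfl
  have he2 : ((fun w : S₂ → ℝ => ⨆ j : Fin n, w ⟨((1 : Fin 3), j), h1mem j⟩) ∘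
      fun a (q : S₂) => f q a) = Ystar := by
    funext ω
    simp only [Function.comp_apply, hf1, hYstar ω]
  rw [he1, he2] at hcomp
  have hx : {ω | X i ω = x} = X i ⁻¹' {x} := rfl
  have hy : {ω | Ystar ω = y} = Ystar ⁻¹' {y} := rfl
  rw [hx, hy]
  exact hcomp.measure_inter_preimage_eq_mul _ _
    (measurableSet_singleton x) (measurableSet_singleton y)

end Aux
/-- Fairness of the double-sample online algorithm (Lemma 10): conditional on
`X i = x` and `Y* = y` with `x > y`, the probability of hiring `i` equals
`∏ j Pr[X j < y]`, independent of `i` and of the arrival order; consequently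
`Pr[hire i | X i = x]` equals `∑_y Pr[Y* = y]·∏ j Pr[X j < y]·1[y < x]`, the
same for every identity and every arrival ordering, so the rule is both IIF
and TIF. -/
theorem stmt_14 {Ω : Type*} [MeasurableSpace Ω] (μ : Measure Ω)
    [IsProbabilityMeasure μ]
    (n : ℕ) (hn : 0 < n) (S : Finset ℝ) (X Y Z : Fin n → Ω → ℝ)
    (hmX : ∀ i, Measurable (X i)) (hmY : ∀ i, Measurable (Y i))
    (hmZ : ∀ i, Measurable (Z i))
    (hsupp : ∀ᵐ ω ∂μ, ∀ i, X i ω ∈ S ∧ Y i ω ∈ S ∧ Z i ω ∈ S)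
    (hindep : iIndepFun (fun (q : Fin 3 × Fin n) => ![X, Y, Z] q.1 q.2) μ)
    (hidY : ∀ i, IdentDistrib (X i) (Y i) μ μ)
    (hidZ : ∀ i, IdentDistrib (X i) (Z i) μ μ)
    (Ystar : Ω → ℝ) (hYstar : ∀ ω, Ystar ω = ⨆ i, Y i ω)
    (hire : Equiv.Perm (Fin n) → Fin n → Set Ω)
    (hhire : ∀ σ i, hire σ i =
      {ω | Ystar ω < X i ω ∧
        (∀ s : Fin n, s < σ.symm i → X (σ s) ω < Ystar ω) ∧
        (∀ s : Fin n, σ.symm i ≤ s → Z (σ s) ω < Ystar ω)}) :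
    (∀ σ : Equiv.Perm (Fin n), ∀ i : Fin n, ∀ x y : ℝ, y < x →
      μ ({ω | X i ω = x} ∩ {ω | Ystar ω = y}) ≠ 0 →
      (ProbabilityTheory.cond μ ({ω | X i ω = x} ∩ {ω | Ystar ω = y})
          (hire σ i)).toReal =
        ∏ j : Fin n, (μ {ω | X j ω < y}).toReal) ∧
    (∀ σ : Equiv.Perm (Fin n), ∀ i : Fin n, ∀ x : ℝ,
      μ {ω | X i ω = x} ≠ 0 →
      (ProbabilityTheory.cond μ {ω | X i ω = x} (hire σ i)).toReal =
        ∑ y ∈ S, (μ {ω | Ystar ω = y}).toReal *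
          (∏ j : Fin n, (μ {ω | X j ω < y}).toReal) *
          (if y < x then 1 else 0)) := by
  classical
  haveI : Nonempty (Fin n) := ⟨⟨0, hn⟩⟩
  have hmYstar : Measurable Ystar := by
    have h : Ystar = fun ω => ⨆ j, Y j ω := funext hYstar
    rw [h]; exact Measurable.iSup hmY
  have hmA : ∀ (i : Fin n) (x : ℝ), MeasurableSet {ω | X i ω = x} :=
    fun i x => hmX i (measurableSet_singleton x)
  have hmYs : ∀ y : ℝ, MeasurableSet {ω | Ystar ω = y} :=
    fun y => hmYstar (measurableSet_singleton y)
  have hinter : ∀ (σ : Equiv.Perm (Fin n)) (i : Fin n) (x y : ℝ), y < x →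
      ({ω | X i ω = x} ∩ {ω | Ystar ω = y}) ∩ hire σ i =
      ({ω | X i ω = x} ∩ {ω | Ystar ω = y}) ∩
        {ω | (∀ s : Fin n, s < σ.symm i → X (σ s) ω < y) ∧
          (∀ s : Fin n, σ.symm i ≤ s → Z (σ s) ω < y)} := by
    intro σ i x y hxy
    rw [hhire]
    ext ω
    simp only [Set.mem_inter_iff, Set.mem_setOf_eq]
    constructor
    · rintro ⟨⟨hx, hy⟩, _, h2, h3⟩
      exact ⟨⟨hx, hy⟩, fun s hs => by rw [← hy]; exact h2 s hs,
        fun s hs => by rw [← hy]; exact h3 s hs⟩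
    · rintro ⟨⟨hx, hy⟩, h2, h3⟩
      exact ⟨⟨hx, hy⟩, by rw [hx, hy]; exact hxy,
        fun s hs => by rw [hy]; exact h2 s hs,
        fun s hs => by rw [hy]; exact h3 s hs⟩
  constructor
  · intro σ i x y hxy hne
    have hkey := aux_key μ n hn X Y Z hmX hmY hmZ hindep hidZ Ystar hYstar σ i y
    have hmAB : MeasurableSet ({ω | X i ω = x} ∩ {ω | Ystar ω = y}) :=
      (hmA i x).inter (hmYs y)
    rw [cond_apply hmAB μ (hire σ i), hinter σ i x y hxy, hkey.2 x, ← mul_assoc,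
      ENNReal.inv_mul_cancel hne (measure_ne_top μ _), one_mul, hkey.1, ENNReal.toReal_prod]
  · intro σ i x hne
    have hmhire : MeasurableSet (hire σ i) := by
      rw [hhire]
      have heq : {ω | Ystar ω < X i ω ∧ (∀ s : Fin n, s < σ.symm i → X (σ s) ω < Ystar ω) ∧
          (∀ s : Fin n, σ.symm i ≤ s → Z (σ s) ω < Ystar ω)} =
        {ω | Ystar ω < X i ω} ∩ ((⋂ s : Fin n, {ω | s < σ.symm i → X (σ s) ω < Ystar ω}) ∩
          (⋂ s : Fin n, {ω | σ.symm i ≤ s → Z (σ s) ω < Ystar ω})) := by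
        ext ω
        simp only [Set.mem_inter_iff, Set.mem_iInter, Set.mem_setOf_eq]
      rw [heq]
      refine (measurableSet_lt hmYstar (hmX i)).inter (MeasurableSet.inter ?_ ?_)
      · refine MeasurableSet.iInter fun s => ?_
        by_cases hs : s < σ.symm i
        · simp only [hs, true_implies]
          exact measurableSet_lt (hmX _) hmYstar
        · simp only [hs, false_implies, Set.setOf_true]
          exact MeasurableSet.univ
      · refine MeasurableSet.iInter fun s => ?_
        by_cases hs : σ.symm i ≤ s
        · simp only [hs, true_implies]
          exact measurableSet_lt (hmZ _) hmYstar
        · simp only [hs, false_implies, Set.setOf_true]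
          exact MeasurableSet.univ
    set E : Set Ω := {ω | X i ω = x} ∩ hire σ i with hEdef
    have hmE : MeasurableSet E := (hmA i x).inter hmhire
    have hGae : ∀ᵐ ω ∂μ, Ystar ω ∈ (S : Set ℝ) := by
      filter_upwards [hsupp] with ω hω
      obtain ⟨j, hj⟩ := exists_eq_ciSup_of_finite (f := fun j => Y j ω)
      rw [hYstar, ← hj]
      exact Finset.mem_coe.2 (hω j).2.1
    have hGnull : μ {ω | Ystar ω ∈ (S : Set ℝ)}ᶜ = 0 := by
      have h := ae_iff.1 hGae
      simpa [Set.compl_setOf] using h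
    have hmG : MeasurableSet {ω | Ystar ω ∈ (S : Set ℝ)} := hmYstar S.measurableSet
    have hE1 : μ E = μ (E ∩ {ω | Ystar ω ∈ (S : Set ℝ)}) := by
      have h := measure_inter_add_diff (μ := μ) E hmG
      have h0 : μ (E \ {ω | Ystar ω ∈ (S : Set ℝ)}) = 0 :=
        measure_mono_null (fun ω hω => hω.2) hGnull
      rw [← h, h0, add_zero]
    have hE2 : E ∩ {ω | Ystar ω ∈ (S : Set ℝ)} = ⋃ y ∈ S, (E ∩ {ω | Ystar ω = y}) := by
      ext ω
      simp only [Set.mem_inter_iff, Set.mem_iUnion, Set.mem_setOf_eq, Finset.mem_coe,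
        exists_prop]
      constructor
      · rintro ⟨hE, hS⟩
        exact ⟨Ystar ω, hS, hE, rfl⟩
      · rintro ⟨y, hy, hE, hYeq⟩
        exact ⟨hE, hYeq ▸ hy⟩
    have hE3 : μ (⋃ y ∈ S, (E ∩ {ω | Ystar ω = y})) = ∑ y ∈ S, μ (E ∩ {ω | Ystar ω = y}) :=
      measure_biUnion_finset
        (fun y _ y' _ hyy' => Set.disjoint_left.2 fun ω hω hω' => hyy' (hω.2.symm.trans hω'.2))
        (fun y _ => hmE.inter (hmYs y))
    have hterm : ∀ y ∈ S, μ (E ∩ {ω | Ystar ω = y}) =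
        μ {ω | X i ω = x} *
          (if y < x then μ {ω | Ystar ω = y} * ∏ j : Fin n, μ {ω | X j ω < y} else 0) := by
      intro y _
      have hkey := aux_key μ n hn X Y Z hmX hmY hmZ hindep hidZ Ystar hYstar σ i y
      have hre : E ∩ {ω | Ystar ω = y} = ({ω | X i ω = x} ∩ {ω | Ystar ω = y}) ∩ hire σ i := by
        rw [hEdef]
        ext ω
        simp only [Set.mem_inter_iff, Set.mem_setOf_eq]
        tauto
      rw [hre]
      by_cases hxy : y < x
      · rw [hinter σ i x y hxy, hkey.2 x,
          aux_split μ n hn X Y Z hmX hmY hmZ hindep Ystar hYstar i x y,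
          hkey.1, if_pos hxy, mul_assoc]
      · rw [if_neg hxy, mul_zero]
        have hempty : ({ω | X i ω = x} ∩ {ω | Ystar ω = y}) ∩ hire σ i = ∅ := by
          rw [hhire]
          apply Set.eq_empty_iff_forall_notMem.2
          rintro ω ⟨⟨hx, hy⟩, hlt, -⟩
          rw [hx, hy] at hlt
          exact hxy hlt
        rw [hempty, measure_empty]
    have hfin : ∀ y ∈ S,
        (if y < x then μ {ω | Ystar ω = y} * ∏ j : Fin n, μ {ω | X j ω < y} else 0) ≠ ⊤ := by
      intro y _
      split_ifs
      · exact ENNReal.mul_ne_top (measure_ne_top μ _)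
          (ENNReal.prod_ne_top fun j _ => measure_ne_top μ _)
      · exact ENNReal.zero_ne_top
    rw [cond_apply (hmA i x) μ (hire σ i), show {ω | X i ω = x} ∩ hire σ i = E from rfl,
      hE1, hE2, hE3, Finset.sum_congr rfl hterm, ← Finset.mul_sum, ← mul_assoc,
      ENNReal.inv_mul_cancel hne (measure_ne_top μ _), one_mul, ENNReal.toReal_sum hfin]
    refine Finset.sum_congr rfl fun y _ => ?_
    by_cases hxy : y < x
    · rw [if_pos hxy, if_pos hxy, ENNReal.toReal_mul, ENNReal.toReal_prod, mul_one]
    · rw [if_neg hxy, if_neg hxy, ENNReal.toReal_zero, mul_zero]
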